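/- Let T, T' be bounded complexes of finitely generated projective A-modules such that Hom_{K^b(proj-A)}(T, T'[i]) = 0 for all i ≠ 0. Then dim_k Hom_{K^b(proj-A)}(T, T') = Σ_{i,j∈ℤ} (-1)^{i-j} dim_k Hom_A(T_i, T'_j). -/

import Mathlib

open Module

/-- Linear equiv between a pi type with almost-all-subsingleton fibers and its restriction. -/
noncomputable def piFinsetEquiv {k : Type*} [Field k] {ι : Type*} (M : ι → Type*)
    [∀ i, AddCommGroup (M i)] [∀ i, Module k (M i)]
    (s : Finset ι) (hs : ∀ i ∉ s, Subsingleton (M i)) :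
    (∀ i, M i) ≃ₗ[k] (∀ i : s, M i) where
  toFun f i := f i
  invFun g i := open scoped Classical in if h : i ∈ s then g ⟨i, h⟩ else 0
  map_add' _ _ := rfl
  map_smul' _ _ := rfl
  left_inv f := by
    funext i
    by_cases h : i ∈ s
    · simp [h]
    · exact (hs i h).elim _ _
  right_inv g := by
    funext i
    simp

lemma finrank_pi_subsingleton {k : Type*} [Field k] {ι : Type*} (M : ι → Type*)
    [∀ i, AddCommGroup (M i)] [∀ i, Module k (M i)] [∀ i, FiniteDimensional k (M i)]
    (s : Finset ι) (hs : ∀ i ∉ s, Subsingleton (M i)) :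
    finrank k (∀ i, M i) = ∑ i ∈ s, finrank k (M i) := by
  rw [(piFinsetEquiv M s hs).finrank_eq, finrank_pi_fintype, ← Finset.sum_attach s fun i => finrank k (M i)]
  rfl

lemma finiteDimensional_pi_subsingleton {k : Type*} [Field k] {ι : Type*} (M : ι → Type*)
    [∀ i, AddCommGroup (M i)] [∀ i, Module k (M i)] [∀ i, FiniteDimensional k (M i)]
    (s : Finset ι) (hs : ∀ i ∉ s, Subsingleton (M i)) :
    FiniteDimensional k (∀ i, M i) :=
  Module.Finite.equiv (piFinsetEquiv M s hs).symm


open Module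

lemma euler_aux {k : Type*} [Field k] (C : ℤ → Type*) [∀ n, AddCommGroup (C n)]
    [∀ n, Module k (C n)] [∀ n, FiniteDimensional k (C n)]
    (d : ∀ n m : ℤ, C n →ₗ[k] C m)
    (N : ℕ) (hbd : ∀ n : ℤ, (n < -(N : ℤ) ∨ (N : ℤ) < n) → Subsingleton (C n))
    (hker : ∀ n : ℤ, n ≠ 0 →
      LinearMap.ker (d n (n + 1)) = LinearMap.range (d (n - 1) n)) :
    ((finrank k (LinearMap.ker (d 0 1)) : ℤ) -
        finrank k (LinearMap.range (d (-1) 0)))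
      = ∑ᶠ n : ℤ, (n.negOnePow : ℤ) * finrank k (C n) := by
  classical
  set u : ℤ → ℤ := fun n => (n.negOnePow : ℤ) * finrank k (LinearMap.range (d n (n + 1))) with hu
  -- support bounds
  have hu0 : ∀ n : ℤ, (n < -(N : ℤ) ∨ (N : ℤ) < n) → u n = 0 := by
    intro n hn
    have : Subsingleton (C n) := hbd n hn
    have : Subsingleton (LinearMap.range (d n (n + 1))) := by
      constructor
      rintro ⟨x, y, rfl⟩ ⟨x', y', rfl⟩
      simp [Subsingleton.elim y y']
    rw [hu]
    simp [Module.finrank_zero_of_subsingleton]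
  have hufin : (Function.support u).Finite := by
    apply Set.Finite.subset (Set.finite_Icc (-(N : ℤ)) N)
    intro n hn
    simp only [Function.mem_support] at hn
    by_contra h
    rw [Set.mem_Icc] at h
    exact hn (hu0 n (by omega))
  have husfin : (Function.support fun n : ℤ => u (n - 1)).Finite := by
    apply Set.Finite.subset (hufin.image (· + 1))
    intro n hn
    exact ⟨n - 1, hn, by ring⟩
  -- pointwise identity
  have key : ∀ n : ℤ, (n.negOnePow : ℤ) * finrank k (C n)
      = (u n - u (n - 1)) + (if n = 0 then
          ((finrank k (LinearMap.ker (d 0 1)) : ℤ) -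
            finrank k (LinearMap.range (d (-1) 0))) else 0) := by
    intro n
    have hD : ∀ (a m m' : ℤ), m = m' →
        (finrank k (LinearMap.range (d a m)) : ℤ) = finrank k (LinearMap.range (d a m')) := by
      rintro a m m' rfl; rfl
    have hrn : finrank k (LinearMap.range (d n (n + 1)))
        + finrank k (LinearMap.ker (d n (n + 1))) = finrank k (C n) :=
      LinearMap.finrank_range_add_finrank_ker (d n (n + 1))
    by_cases hn : n = 0
    · subst hn
      have e1 : ((0:ℤ) - 1) = -1 := by norm_num
      have e2 : ((-1:ℤ) + 1) = 0 := by norm_num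
      have hum1 : u (-1) = -(finrank k (LinearMap.range (d (-1) 0)) : ℤ) := by
        rw [hu]
        simp only [e2]
        have : ((-1 : ℤ).negOnePow : ℤ) = -1 := by decide
        rw [this, hD (-1) (-1+1) 0 (by norm_num)]; ring
      have e3 : ((0:ℤ) + 1) = 1 := by norm_num
      rw [e3] at hrn
      have hu0v : u 0 = (finrank k (LinearMap.range (d 0 1)) : ℤ) := by
        rw [hu]; simp only [e3]; simp
      rw [if_pos rfl, e1, hum1, hu0v, Int.negOnePow_zero]
      push_cast [← hrn]
      ring
    · have hkr : (finrank k (LinearMap.ker (d n (n + 1))) : ℤ)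
          = finrank k (LinearMap.range (d (n - 1) n)) := by
        rw [hker n hn]
      have hun1 : u (n - 1) = -((n.negOnePow : ℤ) * finrank k (LinearMap.ker (d n (n + 1)))) := by
        rw [hu]
        simp only
        have hneg : (((n - 1).negOnePow : ℤˣ) : ℤ) = -((n.negOnePow : ℤˣ) : ℤ) := by
          rw [show n - 1 = n + (-1) from by ring, Int.negOnePow_add]
          have : ((-1 : ℤ).negOnePow : ℤ) = -1 := by decide
          push_cast [this]
          ring
        rw [show n - 1 + 1 = n from by ring, hneg, hkr]
        ring
      rw [if_neg hn, add_zero, hun1, hu]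
      simp only
      push_cast [← hrn]
      ring
  calc ((finrank k (LinearMap.ker (d 0 1)) : ℤ) -
        finrank k (LinearMap.range (d (-1) 0)))
      = ∑ᶠ n : ℤ, ((u n - u (n - 1)) + (if n = 0 then
          ((finrank k (LinearMap.ker (d 0 1)) : ℤ) -
            finrank k (LinearMap.range (d (-1) 0))) else 0)) := by
        have hitefin : (Function.support fun n : ℤ => (if n = 0 then
            ((finrank k (LinearMap.ker (d 0 1)) : ℤ) -
              finrank k (LinearMap.range (d (-1) 0))) else 0)).Finite := by
          apply Set.Finite.subset (Set.finite_singleton (0:ℤ))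
          intro x hx
          simp only [Function.mem_support] at hx
          by_contra h
          exact hx (if_neg h)
        rw [finsum_add_distrib (Set.Finite.subset (hufin.union husfin)
          (Function.support_sub _ _)) hitefin]
        have hre := finsum_comp_equiv (Equiv.subRight (1:ℤ)) (f := u)
        simp only [Equiv.subRight_apply] at hre
        rw [finsum_sub_distrib hufin husfin, hre, sub_self, zero_add,
          finsum_eq_single _ (0:ℤ) (fun x hx => if_neg hx), if_pos rfl]
    _ = ∑ᶠ n : ℤ, (n.negOnePow : ℤ) * finrank k (C n) := by
        exact finsum_congr fun n => (key n).symm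


open CategoryTheory Module

section
variable {k : Type*} [Field k] {A : Type*} [Ring A] [Algebra k A]
  [FiniteDimensional k A]

open scoped ModuleCat

lemma findim_hom (X Y : ModuleCat.{v} Aᵐᵒᵖ)
    (hX : Module.Finite Aᵐᵒᵖ X) (hY : Module.Finite Aᵐᵒᵖ Y) :
    FiniteDimensional k (X ⟶ Y) := by
  letI : Module k X := ModuleCat.moduleOfAlgebraModule X
  letI : Module k Y := ModuleCat.moduleOfAlgebraModule Y
  haveI : IsScalarTower k Aᵐᵒᵖ X := ModuleCat.isScalarTower_of_algebra_moduleCat X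
  haveI : IsScalarTower k Aᵐᵒᵖ Y := ModuleCat.isScalarTower_of_algebra_moduleCat Y
  haveI : Module.Finite k Aᵐᵒᵖ := Module.Finite.equiv (MulOpposite.opLinearEquiv k)
  haveI : Module.Finite k X := Module.Finite.trans Aᵐᵒᵖ X
  haveI : Module.Finite k Y := Module.Finite.trans Aᵐᵒᵖ Y
  let f : (X ⟶ Y) →ₗ[k] (X →ₗ[k] Y) :=
    { toFun := fun φ => φ.hom.restrictScalars k
      map_add' := fun φ ψ => rfl
      map_smul' := fun c φ => rfl }
  have hf : Function.Injective f := by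
    intro φ ψ h
    ext x
    exact congrArg (fun (g : X →ₗ[k] Y) => g x) h
  exact FiniteDimensional.of_injective f hf
end


open CategoryTheory CategoryTheory.Limits Module CochainComplex.HomComplex

section
variable {k : Type*} [Field k] {A : Type*} [Ring A] [Algebra k A]
  [FiniteDimensional k A]
  (F G : CochainComplex (ModuleCat.{v} Aᵐᵒᵖ) ℤ)

lemma hom_subsingleton_of_src {X Y : ModuleCat.{v} Aᵐᵒᵖ} (h : IsZero X) :
    Subsingleton (X ⟶ Y) :=
  ⟨fun f g => h.eq_of_src f g⟩

lemma hom_subsingleton_of_tgt {X Y : ModuleCat.{v} Aᵐᵒᵖ} (h : IsZero Y) :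
    Subsingleton (X ⟶ Y) :=
  ⟨fun f g => h.eq_of_tgt f g⟩

variable {F G} in
lemma cochain_findim (hFp : ∀ i : ℤ, Module.Finite Aᵐᵒᵖ (F.X i))
    (hGp : ∀ i : ℤ, Module.Finite Aᵐᵒᵖ (G.X i))
    (a b : ℤ) (hFb : ∀ i : ℤ, (i < a ∨ b < i) → IsZero (F.X i)) (n : ℤ) :
    FiniteDimensional k (Cochain F G n) := by
  classical
  haveI : ∀ t : Triplet n, FiniteDimensional k (F.X t.p ⟶ G.X t.q) :=
    fun t => findim_hom _ _ (hFp t.p) (hGp t.q)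
  exact finiteDimensional_pi_subsingleton (fun t : Triplet n => F.X t.p ⟶ G.X t.q)
    ((Finset.Icc a b).image (fun p => ⟨p, p + n, rfl⟩))
    (by
      intro t ht
      refine hom_subsingleton_of_src (hFb t.p ?_)
      by_contra h
      push_neg at h
      refine ht (Finset.mem_image.2 ⟨t.p, Finset.mem_Icc.2 (by omega), ?_⟩)
      obtain ⟨p, q, hpq⟩ := t
      dsimp at *
      subst hpq
      rfl)

variable {F G} in
lemma cochain_finrank (hFp : ∀ i : ℤ, Module.Finite Aᵐᵒᵖ (F.X i))
    (hGp : ∀ i : ℤ, Module.Finite Aᵐᵒᵖ (G.X i))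
    (a b : ℤ) (hFb : ∀ i : ℤ, (i < a ∨ b < i) → IsZero (F.X i)) (n : ℤ) :
    finrank k (Cochain F G n) = ∑ p ∈ Finset.Icc a b, finrank k (F.X p ⟶ G.X (p + n)) := by
  classical
  haveI : ∀ t : Triplet n, FiniteDimensional k (F.X t.p ⟶ G.X t.q) :=
    fun t => findim_hom _ _ (hFp t.p) (hGp t.q)
  rw [show finrank k (Cochain F G n)
      = finrank k (∀ t : Triplet n, (F.X t.p ⟶ G.X t.q)) from rfl]
  rw [finrank_pi_subsingleton (k := k) (fun t : Triplet n => F.X t.p ⟶ G.X t.q)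
    ((Finset.Icc a b).image (fun p => ⟨p, p + n, rfl⟩))
    (by
      intro t ht
      refine hom_subsingleton_of_src (hFb t.p ?_)
      by_contra h
      push_neg at h
      refine ht (Finset.mem_image.2 ⟨t.p, Finset.mem_Icc.2 (by omega), ?_⟩)
      obtain ⟨p, q, hpq⟩ := t
      dsimp at *
      subst hpq
      rfl)]
  rw [Finset.sum_image]
  intro x _ y _ h
  exact congrArg CochainComplex.HomComplex.Triplet.p h
end


open CategoryTheory CategoryTheory.Limits Module CochainComplex.HomComplex

universe v u

section
variable {k : Type*} [Field k] {A : Type u} [Ring A] [Algebra k A]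
  (T T' : CochainComplex (ModuleCat.{v} Aᵐᵒᵖ) ℤ)

lemma ker_eq_range
    (hvan : ∀ i : ℤ, i ≠ 0 → ∀ f : (HomotopyCategory.quotient (ModuleCat.{v} Aᵐᵒᵖ) (ComplexShape.up ℤ)).obj T ⟶ ((HomotopyCategory.quotient (ModuleCat.{v} Aᵐᵒᵖ) (ComplexShape.up ℤ)).obj T')⟦i⟧, f = 0)
    (n : ℤ) (hn : n ≠ 0) :
    LinearMap.ker (δ_hom k T T' n (n + 1)) = LinearMap.range (δ_hom k T T' (n - 1) n) := by
  ext z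
  constructor
  · intro hz
    replace hz : δ n (n + 1) z = 0 := hz
    have h1 : δ 0 1 (z.rightShift n 0 (zero_add n)) = 0 := by
      rw [Cochain.δ_rightShift z n 0 1 (zero_add n) (n + 1) (by omega), hz,
        Cochain.rightShift_zero, smul_zero]
    set zc : Cocycle T (T'⟦n⟧) 0 := Cocycle.mk _ 1 (zero_add 1) h1 with hzc
    set g : T ⟶ (T'⟦n⟧) := Cocycle.homOf zc with hg
    have hq : (HomotopyCategory.quotient (ModuleCat.{v} Aᵐᵒᵖ) (ComplexShape.up ℤ)).map g = 0 := by
      have e := ((HomotopyCategory.quotient (ModuleCat.{v} Aᵐᵒᵖ) (ComplexShape.up ℤ)).commShiftIso n).app T'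
      have h0 := hvan n hn ((HomotopyCategory.quotient (ModuleCat.{v} Aᵐᵒᵖ) (ComplexShape.up ℤ)).map g ≫ e.hom)
      calc (HomotopyCategory.quotient (ModuleCat.{v} Aᵐᵒᵖ) (ComplexShape.up ℤ)).map g = ((HomotopyCategory.quotient (ModuleCat.{v} Aᵐᵒᵖ) (ComplexShape.up ℤ)).map g ≫ e.hom) ≫ e.inv := by simp
        _ = 0 := by rw [h0, Limits.zero_comp]
    have h2 : Homotopy g 0 := HomotopyCategory.homotopyOfEq _ _ (by
      rw [hq, Functor.map_zero])
    have h3 : δ (-1) 0 (Cochain.ofHomotopy h2) = z.rightShift n 0 (zero_add n) := by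
      rw [δ_ofHomotopy]
      simp [hg, hzc]
    refine ⟨n.negOnePow • (Cochain.ofHomotopy h2).rightUnshift (n - 1) (by omega), ?_⟩
    have h4 : δ (n - 1) n ((Cochain.ofHomotopy h2).rightUnshift (n - 1) (by omega))
        = n.negOnePow • z := by
      rw [Cochain.δ_rightUnshift _ (n - 1) (by omega) n 0 (zero_add n), h3,
        Cochain.rightUnshift_rightShift]
    show δ (n - 1) n _ = z
    rw [δ_units_smul, h4, smul_smul, Int.units_mul_self, one_smul]
  · rintro ⟨w, rfl⟩
    show δ n (n + 1) (δ (n - 1) n w) = 0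
    exact δ_δ _ _ _ w

variable {T T'} in
lemma homotopy_hom_finrank [FiniteDimensional k (Cochain T T' 0)]
    [FiniteDimensional k (Cochain T T' (-1))] :
    (finrank k ((HomotopyCategory.quotient (ModuleCat.{v} Aᵐᵒᵖ) (ComplexShape.up ℤ)).obj T ⟶ (HomotopyCategory.quotient (ModuleCat.{v} Aᵐᵒᵖ) (ComplexShape.up ℤ)).obj T') : ℤ)
      = (finrank k (LinearMap.ker (δ_hom k T T' 0 1)) : ℤ)
        - finrank k (LinearMap.range (δ_hom k T T' (-1) 0)) := by
  classical
  set Φ : (T ⟶ T') →ₗ[k] Cochain T T' 0 :=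
    { toFun := Cochain.ofHom
      map_add' := Cochain.ofHom_add
      map_smul' := fun c φ => by
        refine Cochain.ext₀ _ _ (fun p => ?_)
        simp } with hΦ
  have hΦinj : Function.Injective Φ := by
    intro φ ψ h
    have h' : Cochain.ofHom φ = Cochain.ofHom ψ := h
    have hp : ∀ p, φ.f p = ψ.f p := fun p => by
      simpa using Cochain.congr_v h' p p (add_zero p)
    ext p x
    rw [hp p]
  have hΦrange : LinearMap.range Φ = LinearMap.ker (δ_hom k T T' 0 1) := by
    ext z
    constructor
    · rintro ⟨φ, rfl⟩
      show δ 0 1 (Cochain.ofHom φ) = 0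
      exact δ_ofHom φ
    · intro hz
      replace hz : δ 0 1 z = 0 := hz
      refine ⟨Cocycle.homOf (Cocycle.mk z 1 (zero_add 1) hz), ?_⟩
      show Cochain.ofHom _ = z
      exact Cocycle.cochain_ofHom_homOf_eq_coe _
  haveI : FiniteDimensional k (T ⟶ T') := FiniteDimensional.of_injective Φ hΦinj
  set ψ : (T ⟶ T') →ₗ[k] ((HomotopyCategory.quotient (ModuleCat.{v} Aᵐᵒᵖ) (ComplexShape.up ℤ)).obj T ⟶ (HomotopyCategory.quotient (ModuleCat.{v} Aᵐᵒᵖ) (ComplexShape.up ℤ)).obj T') := (HomotopyCategory.quotient (ModuleCat.{v} Aᵐᵒᵖ) (ComplexShape.up ℤ)).mapLinearMap k with hψ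
  have hψsurj : Function.Surjective ψ := (HomotopyCategory.quotient (ModuleCat.{v} Aᵐᵒᵖ) (ComplexShape.up ℤ)).map_surjective
  have hkerψ : Submodule.map Φ (LinearMap.ker ψ) = LinearMap.range (δ_hom k T T' (-1) 0) := by
    ext z
    constructor
    · rintro ⟨f, hf, rfl⟩
      replace hf : (HomotopyCategory.quotient (ModuleCat.{v} Aᵐᵒᵖ) (ComplexShape.up ℤ)).map f = 0 := hf
      have h : Homotopy f 0 := HomotopyCategory.homotopyOfEq _ _ (by
        rw [hf, Functor.map_zero])
      refine ⟨Cochain.ofHomotopy h, ?_⟩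
      show δ (-1) 0 (Cochain.ofHomotopy h) = Cochain.ofHom f
      rw [δ_ofHomotopy]
      simp
    · rintro ⟨w, rfl⟩
      refine ⟨Homotopy.nullHomotopicMap'
        (fun i j hij => w.v i j (by have hij' : j + 1 = i := hij; omega)), ?_, ?_⟩
      · show (HomotopyCategory.quotient (ModuleCat.{v} Aᵐᵒᵖ) (ComplexShape.up ℤ)).map _ = 0
        rw [show (0 : (HomotopyCategory.quotient (ModuleCat.{v} Aᵐᵒᵖ) (ComplexShape.up ℤ)).obj T ⟶ (HomotopyCategory.quotient (ModuleCat.{v} Aᵐᵒᵖ) (ComplexShape.up ℤ)).obj T') = (HomotopyCategory.quotient (ModuleCat.{v} Aᵐᵒᵖ) (ComplexShape.up ℤ)).map 0 from (Functor.map_zero _ _ _).symm]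
        exact HomotopyCategory.eq_of_homotopy _ _ (Homotopy.nullHomotopy' _)
      · show Cochain.ofHom _ = δ (-1) 0 w
        exact (δ_neg_one_cochain w).symm
  have e1 : finrank k (T ⟶ T') = finrank k (LinearMap.ker (δ_hom k T T' 0 1)) := by
    rw [← hΦrange]
    exact (LinearEquiv.ofInjective Φ hΦinj).finrank_eq
  have e2 : finrank k (LinearMap.ker ψ)
      = finrank k (LinearMap.range (δ_hom k T T' (-1) 0)) := by
    rw [← hkerψ]
    exact (Submodule.equivMapOfInjective Φ hΦinj (LinearMap.ker ψ)).finrank_eq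
  have e3 : finrank k (LinearMap.range ψ) + finrank k (LinearMap.ker ψ)
      = finrank k (T ⟶ T') := LinearMap.finrank_range_add_finrank_ker ψ
  have e4 : finrank k (LinearMap.range ψ) = finrank k ((HomotopyCategory.quotient (ModuleCat.{v} Aᵐᵒᵖ) (ComplexShape.up ℤ)).obj T ⟶ (HomotopyCategory.quotient (ModuleCat.{v} Aᵐᵒᵖ) (ComplexShape.up ℤ)).obj T') := by
    rw [LinearMap.range_eq_top.2 hψsurj]
    exact finrank_top k _
  omega
end


section
universe v' u'
variable {k : Type*} [Field k] {A : Type u'} [Ring A] [Algebra k A]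
  {F G : CochainComplex (ModuleCat.{v'} Aᵐᵒᵖ) ℤ}

open CochainComplex.HomComplex in
lemma cochain_subsingleton {n : ℤ}
    (h : ∀ t : Triplet n, Subsingleton (F.X t.p ⟶ G.X t.q)) :
    Subsingleton (Cochain F G n) := by
  constructor
  intro x y
  refine Cochain.ext x y (fun p q hpq => ?_)
  exact @Subsingleton.elim _ (h ⟨p, q, hpq⟩) _ _
end


open CategoryTheory CategoryTheory.Limits

/-- **Happel's formula.** Let `T, T'` be bounded complexes of finitely
generated projective right `A`-modules such that `Hom_{K^b(proj-A)}(T, T'[i]) = 0`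
for all `i ≠ 0`.  Then
`dim_k Hom_{K^b(proj-A)}(T, T') = Σ_{i,j ∈ ℤ} (-1)^{i-j} dim_k Hom_A(T_i, T'_j)`. -/
theorem stmt_2 (k : Type*) [Field k] (A : Type*) [Ring A] [Algebra k A]
    [FiniteDimensional k A]
    (T T' : CochainComplex (ModuleCat Aᵐᵒᵖ) ℤ)
    -- `T` and `T'` are bounded
    (hTb : ∃ a b : ℤ, ∀ i : ℤ, (i < a ∨ b < i) → IsZero (T.X i))
    (hT'b : ∃ a b : ℤ, ∀ i : ℤ, (i < a ∨ b < i) → IsZero (T'.X i))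
    -- with finitely generated projective components
    (hTp : ∀ i : ℤ, Projective (T.X i) ∧ Module.Finite Aᵐᵒᵖ (T.X i))
    (hT'p : ∀ i : ℤ, Projective (T'.X i) ∧ Module.Finite Aᵐᵒᵖ (T'.X i))
    -- `Hom_{K^b(proj-A)}(T, T'[i]) = 0` for `i ≠ 0`
    (hvan : ∀ i : ℤ, i ≠ 0 →
      ∀ f : (HomotopyCategory.quotient (ModuleCat Aᵐᵒᵖ) (ComplexShape.up ℤ)).obj T ⟶
        ((HomotopyCategory.quotient (ModuleCat Aᵐᵒᵖ) (ComplexShape.up ℤ)).obj T')⟦i⟧,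
        f = 0) :
    (Module.finrank k
        ((HomotopyCategory.quotient (ModuleCat Aᵐᵒᵖ) (ComplexShape.up ℤ)).obj T ⟶
          (HomotopyCategory.quotient (ModuleCat Aᵐᵒᵖ) (ComplexShape.up ℤ)).obj T') : ℤ) =
      ∑ᶠ (i : ℤ) (j : ℤ),
        ((i - j).negOnePow : ℤ) * Module.finrank k (T.X i ⟶ T'.X j) := by
  classical
  obtain ⟨a, b, hTb⟩ := hTb
  obtain ⟨a', b', hT'b⟩ := hT'b
  haveI hfd : ∀ n : ℤ, FiniteDimensional k (CochainComplex.HomComplex.Cochain T T' n) := fun n =>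
    cochain_findim (fun i => (hTp i).2) (fun i => (hT'p i).2) a b hTb n
  haveI := hfd 0
  haveI := hfd (-1)
  have hzero_src : ∀ i j : ℤ, (i < a ∨ b < i) →
      Module.finrank k (T.X i ⟶ T'.X j) = 0 := fun i j h => by
    haveI := hom_subsingleton_of_src (Y := T'.X j) (hTb i h)
    exact Module.finrank_zero_of_subsingleton
  have hzero_tgt : ∀ i j : ℤ, (j < a' ∨ b' < j) →
      Module.finrank k (T.X i ⟶ T'.X j) = 0 := fun i j h => by
    haveI := hom_subsingleton_of_tgt (X := T.X i) (hT'b j h)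
    exact Module.finrank_zero_of_subsingleton
  have hsub : ∀ n : ℤ, (n < a' - b ∨ b' - a < n) →
      Subsingleton (CochainComplex.HomComplex.Cochain T T' n) := by
    intro n hn
    apply cochain_subsingleton
    intro t
    by_cases hp : t.p < a ∨ b < t.p
    · exact hom_subsingleton_of_src (hTb t.p hp)
    · push_neg at hp
      refine hom_subsingleton_of_tgt (hT'b t.q ?_)
      have := t.hpq
      omega
  set N : ℕ := (b - a').toNat + (b' - a).toNat with hN
  calc (Module.finrank k
        ((HomotopyCategory.quotient (ModuleCat Aᵐᵒᵖ) (ComplexShape.up ℤ)).obj T ⟶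
          (HomotopyCategory.quotient (ModuleCat Aᵐᵒᵖ) (ComplexShape.up ℤ)).obj T') : ℤ)
      = (Module.finrank k
            (LinearMap.ker (CochainComplex.HomComplex.δ_hom k T T' 0 1)) : ℤ)
          - Module.finrank k
            (LinearMap.range (CochainComplex.HomComplex.δ_hom k T T' (-1) 0)) :=
        homotopy_hom_finrank
    _ = ∑ᶠ n : ℤ, (n.negOnePow : ℤ) *
          Module.finrank k (CochainComplex.HomComplex.Cochain T T' n) := by
        refine euler_aux (fun n => CochainComplex.HomComplex.Cochain T T' n)
          (CochainComplex.HomComplex.δ_hom k T T') N ?_ ?_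
        · intro n hn
          exact hsub n (by omega)
        · intro n hn
          exact ker_eq_range T T' hvan n hn
    _ = ∑ n ∈ Finset.Icc (a' - b) (b' - a), (n.negOnePow : ℤ) *
          ∑ p ∈ Finset.Icc a b, (Module.finrank k (T.X p ⟶ T'.X (p + n)) : ℤ) := by
        rw [finsum_eq_sum_of_support_subset]
        · refine Finset.sum_congr rfl (fun n _ => ?_)
          rw [cochain_finrank (fun i => (hTp i).2) (fun i => (hT'p i).2) a b hTb n]
          push_cast
          ring
        · intro n hn
          simp only [Function.mem_support, ne_eq] at hn
          simp only [Finset.coe_Icc, Set.mem_Icc]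
          by_contra h
          haveI := hsub n (by omega)
          exact hn (by rw [Module.finrank_zero_of_subsingleton]; ring)
    _ = ∑ p ∈ Finset.Icc a b, ∑ j ∈ Finset.Icc a' b',
          ((p - j).negOnePow : ℤ) * Module.finrank k (T.X p ⟶ T'.X j) := by
        simp_rw [Finset.mul_sum]
        rw [Finset.sum_comm]
        refine Finset.sum_congr rfl (fun p hp => ?_)
        rw [Finset.mem_Icc] at hp
        have hmap : ∑ j ∈ Finset.Icc (p + (a' - b)) (p + (b' - a)),
            ((p - j).negOnePow : ℤ) * Module.finrank k (T.X p ⟶ T'.X j)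
            = ∑ n ∈ Finset.Icc (a' - b) (b' - a),
              ((n.negOnePow : ℤˣ) : ℤ) * Module.finrank k (T.X p ⟶ T'.X (p + n)) := by
          rw [← Finset.map_add_left_Icc, Finset.sum_map]
          refine Finset.sum_congr rfl (fun n _ => ?_)
          have h1 : p - (addLeftEmbedding p) n = -n := by
            simp only [addLeftEmbedding_apply]
            ring
          rw [h1, Int.negOnePow_neg]
          rfl
        rw [← hmap]
        refine (Finset.sum_subset (Finset.Icc_subset_Icc (by omega) (by omega)) ?_).symm
        intro j _ hj
        rw [Finset.mem_Icc] at hj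
        rw [hzero_tgt p j (by omega)]
        ring
    _ = ∑ᶠ (i : ℤ) (j : ℤ),
          ((i - j).negOnePow : ℤ) * Module.finrank k (T.X i ⟶ T'.X j) := by
        have inner_eq : ∀ i : ℤ,
            (∑ᶠ j : ℤ, ((i - j).negOnePow : ℤ) * Module.finrank k (T.X i ⟶ T'.X j))
            = ∑ j ∈ Finset.Icc a' b',
                ((i - j).negOnePow : ℤ) * Module.finrank k (T.X i ⟶ T'.X j) := by
          intro i
          refine finsum_eq_sum_of_support_subset _ ?_
          intro j hj
          simp only [Function.mem_support, ne_eq] at hj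
          simp only [Finset.coe_Icc, Set.mem_Icc]
          by_contra h
          exact hj (by rw [hzero_tgt i j (by omega)]; ring)
        rw [show (∑ᶠ (i : ℤ) (j : ℤ),
            ((i - j).negOnePow : ℤ) * Module.finrank k (T.X i ⟶ T'.X j))
            = ∑ᶠ i : ℤ, ∑ j ∈ Finset.Icc a' b',
                ((i - j).negOnePow : ℤ) * Module.finrank k (T.X i ⟶ T'.X j)
          from finsum_congr inner_eq]
        refine (finsum_eq_sum_of_support_subset _ ?_).symm
        intro i hi
        simp only [Function.mem_support, ne_eq] at hi
        simp only [Finset.coe_Icc, Set.mem_Icc]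
        by_contra h
        refine hi (Finset.sum_eq_zero (fun j _ => ?_))
        rw [hzero_src i j (by omega)]
        ring
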